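/- Divergence of the length integral at the well: there exists δ ∈ (0,1) such that for every M ∈ (1−δ, 1) one has F(s) > F(M) for all s ∈ [0, M) and the integral ∫₀^M ds/√(F(s) − F(M)) is finite; moreover ∫₀^M ds/√(F(s) − F(M)) → +∞ as M → 1⁻. -/

import Mathlib

open MeasureTheory Filter

open Set intervalIntegral in
private lemma aux_int_one_sub (s M : ℝ) :
    ∫ t in s..M, (1 - t) = ((1-s)^2 - (1-M)^2)/2 := by
  have h : ∫ t in s..M, (1 - t) = (∫ _t in s..M, (1:ℝ)) - ∫ t in s..M, t :=
    integral_sub intervalIntegrable_const intervalIntegrable_id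
  rw [h, intervalIntegral.integral_const, integral_id]
  simp only [smul_eq_mul, mul_one]
  ring

theorem length_integral_diverges_at_well
    (F : ℝ → ℝ) (hF : ContDiff ℝ 2 F)
    (h1 : F 1 = 0) (h2 : deriv F 1 = 0) (h3 : 0 < deriv (deriv F) 1)
    (h4 : ∀ s ∈ Set.Ico (0 : ℝ) 1, 0 < F s) :
    ∃ δ ∈ Set.Ioo (0 : ℝ) 1,
      (∀ M ∈ Set.Ioo (1 - δ) 1,
        (∀ s ∈ Set.Ico (0 : ℝ) M, F M < F s) ∧
        IntegrableOn (fun s => 1 / Real.sqrt (F s - F M)) (Set.Ioo 0 M)) ∧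
      Tendsto (fun M => ∫ s in Set.Ioo (0 : ℝ) M, 1 / Real.sqrt (F s - F M))
        (nhdsWithin 1 (Set.Iio 1)) atTop := by
  open Set intervalIntegral in
  -- regularity
  have h2' : ContDiff ℝ (1+1) F := by norm_num at hF ⊢; exact hF
  obtain ⟨hFd, -, hdF1⟩ := contDiff_succ_iff_deriv.mp h2'
  have hdFd : Differentiable ℝ (deriv F) := hdF1.differentiable one_ne_zero
  have hcF' : Continuous (deriv F) := hdFd.continuous
  have hcF'' : Continuous (deriv (deriv F)) := hdF1.continuous_deriv le_rfl
  have hcF : Continuous F := hFd.continuous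
  set c := deriv (deriv F) 1 with hc
  set m := c/2 with hm
  set K := 2*c with hK
  have hm0 : 0 < m := by positivity
  have hK0 : 0 < K := by positivity
  -- choose η for F'' bounds
  obtain ⟨η, hη0, hη12, hηb⟩ :
      ∃ η > (0:ℝ), η ≤ 1/2 ∧ ∀ t, |t - 1| ≤ η → m ≤ deriv (deriv F) t ∧
        deriv (deriv F) t ≤ K := by
    obtain ⟨d, hd0, hd⟩ := Metric.continuousAt_iff.mp hcF''.continuousAt (c/2) (by positivity)
    refine ⟨min (d/2) (1/2), by positivity, min_le_right _ _, fun t ht => ?_⟩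
    have h1 : |t - 1| < d := by
      have := min_le_left (d/2) (1/2)
      calc |t - 1| ≤ min (d/2) (1/2) := ht
        _ < d := by linarith
    have := hd (show dist t 1 < d by simpa [Real.dist_eq] using h1)
    rw [Real.dist_eq, ← hc] at this
    have := abs_lt.mp this
    refine ⟨?_, ?_⟩
    · rw [hm]; linarith [this.1]
    · rw [hK]; linarith [this.2]
  set a := 1 - η with ha
  have ha01 : 0 < a := by rw [ha]; linarith
  have ha1 : a < 1 := by rw [ha]; linarith
  -- FTC facts
  have FTC : ∀ s M : ℝ, ∫ t in s..M, deriv F t = F M - F s := fun s M =>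
    integral_deriv_eq_sub (fun x _ => hFd x) (hcF'.intervalIntegrable _ _)
  have FTC2 : ∀ s M : ℝ, ∫ t in s..M, deriv (deriv F) t = deriv F M - deriv F s :=
    fun s M => integral_deriv_eq_sub (fun x _ => hdFd x) (hcF''.intervalIntegrable _ _)
  -- bounds on -F'
  have hF'bound : ∀ t ∈ Icc a 1, m * (1 - t) ≤ -deriv F t ∧ -deriv F t ≤ K * (1 - t) := by
    intro t ht
    have ht1 : t ≤ 1 := ht.2
    have habs : ∀ x ∈ Icc t 1, |x - 1| ≤ η := by
      intro x hx
      rw [abs_le]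
      constructor <;> [skip; linarith [hx.2]]
      have : a ≤ x := le_trans ht.1 hx.1
      rw [ha] at this; linarith
    have key : -deriv F t = ∫ x in t..(1:ℝ), deriv (deriv F) x := by
      rw [FTC2 t 1, h2]; ring
    constructor
    · have hmono : ∫ x in t..(1:ℝ), (m:ℝ) ≤ ∫ x in t..(1:ℝ), deriv (deriv F) x := by
        apply integral_mono_on ht1 intervalIntegrable_const (hcF''.intervalIntegrable _ _)
        intro x hx; exact (hηb x (habs x hx)).1
      rw [intervalIntegral.integral_const, smul_eq_mul] at hmono
      rw [key]; linarith [hmono]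
    · have hmono : ∫ x in t..(1:ℝ), deriv (deriv F) x ≤ ∫ x in t..(1:ℝ), (K:ℝ) := by
        apply integral_mono_on ht1 (hcF''.intervalIntegrable _ _) intervalIntegrable_const
        intro x hx; exact (hηb x (habs x hx)).2
      rw [intervalIntegral.integral_const, smul_eq_mul] at hmono
      rw [key]; linarith [hmono]
  -- upper bound on F near 1
  have hFupper : ∀ s ∈ Icc a 1, F s ≤ K/2 * (1 - s)^2 := by
    intro s hs
    have key : F s = ∫ t in s..(1:ℝ), -deriv F t := by
      rw [_root_.intervalIntegral.integral_neg, FTC s 1, h1]; ring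
    have hmono : ∫ t in s..(1:ℝ), -deriv F t ≤ ∫ t in s..(1:ℝ), K * (1 - t) := by
      apply integral_mono_on hs.2 ((hcF'.neg).intervalIntegrable _ _)
        ((continuous_const.mul (continuous_const.sub continuous_id)).intervalIntegrable _ _)
      intro t ht
      exact (hF'bound t ⟨le_trans hs.1 ht.1, ht.2⟩).2
    rw [key]
    calc ∫ t in s..(1:ℝ), -deriv F t ≤ ∫ t in s..(1:ℝ), K * (1 - t) := hmono
      _ = K * (((1-s)^2 - (1-(1:ℝ))^2)/2) := by rw [intervalIntegral.integral_const_mul, aux_int_one_sub]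
      _ = K/2 * (1 - s)^2 := by ring
  -- lower bound on F s - F M near 1
  have hFdiff : ∀ s M : ℝ, a ≤ s → s ≤ M → M ≤ 1 →
      m/2 * ((1-s)^2 - (1-M)^2) ≤ F s - F M := by
    intro s M has hsM hM1
    have key : F s - F M = ∫ t in s..M, -deriv F t := by
      rw [_root_.intervalIntegral.integral_neg, FTC s M]; ring
    have hmono : ∫ t in s..M, m * (1 - t) ≤ ∫ t in s..M, -deriv F t := by
      apply integral_mono_on hsM
        ((continuous_const.mul (continuous_const.sub continuous_id)).intervalIntegrable _ _)
        ((hcF'.neg).intervalIntegrable _ _)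
      intro t ht
      exact (hF'bound t ⟨le_trans has ht.1, le_trans ht.2 hM1⟩).1
    rw [key]
    calc m/2 * ((1-s)^2 - (1-M)^2) = m * (((1-s)^2 - (1-M)^2)/2) := by ring
      _ = ∫ t in s..M, m * (1 - t) := by rw [intervalIntegral.integral_const_mul, aux_int_one_sub]
      _ ≤ ∫ t in s..M, -deriv F t := hmono
  -- strict decrease on [a,1]
  have hanti : StrictAntiOn F (Icc a 1) := by
    apply strictAntiOn_of_deriv_neg (convex_Icc _ _) hcF.continuousOn
    intro x hx
    rw [interior_Icc] at hx
    have := (hF'bound x ⟨le_of_lt hx.1, le_of_lt hx.2⟩).1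
    nlinarith [hx.2]
  -- minimum of F on [0,a]
  obtain ⟨x₀, hx₀, hmin⟩ := (isCompact_Icc).exists_isMinOn (α := ℝ)
    (show (Icc (0:ℝ) a).Nonempty from ⟨0, le_refl 0, le_of_lt ha01⟩) hcF.continuousOn
  set ε₀ := F x₀ with hε₀def
  have hε₀ : 0 < ε₀ := h4 x₀ ⟨hx₀.1, lt_of_le_of_lt hx₀.2 ha1⟩
  have hεmin : ∀ s ∈ Icc (0:ℝ) a, ε₀ ≤ F s := fun s hs => hmin hs
  -- δ' from continuity of F at 1
  obtain ⟨d', hd'0, hd'⟩ := Metric.continuousAt_iff.mp hcF.continuousAt (ε₀/2) (by positivity)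
  set δ := min η (min d' 1) with hδ
  have hδ0 : 0 < δ := by positivity
  have hδη : δ ≤ η := min_le_left _ _
  have hδ1 : δ < 1 := lt_of_le_of_lt hδη (by linarith)
  have hδd' : δ ≤ d' := le_trans (min_le_right _ _) (min_le_left _ _)
  -- the main pointwise facts for M
  have hFM : ∀ M ∈ Ioo (1-δ) 1, F M < ε₀/2 ∧ 0 < F M ∧ a < M := by
    intro M hM
    have hM1 : M < 1 := hM.2
    have hMa : a < M := by
      have : 1 - δ ≥ 1 - η := by linarith
      calc a = 1 - η := ha
        _ ≤ 1 - δ := by linarith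
        _ < M := hM.1
    have hM0 : 0 < M := lt_trans ha01 hMa
    have hdist : dist M 1 < d' := by
      rw [Real.dist_eq, abs_lt]
      constructor <;> [linarith [hM.1]; linarith]
    have := hd' hdist
    rw [Real.dist_eq, h1, sub_zero] at this
    refine ⟨lt_of_le_of_lt (le_abs_self _) this, h4 M ⟨le_of_lt hM0, hM1⟩, hMa⟩
  set cK := (Real.sqrt (K/2))⁻¹ with hcK
  have hcK0 : 0 < cK := inv_pos.mpr (Real.sqrt_pos.mpr (by positivity))
  have main : ∀ M ∈ Ioo (1-δ) 1,
      (∀ s ∈ Ico (0:ℝ) M, F M < F s) ∧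
      IntegrableOn (fun s => 1 / Real.sqrt (F s - F M)) (Ioo 0 M) ∧
      cK * (Real.log (1-a) - Real.log (1-M)) ≤
        ∫ s in Ioo (0:ℝ) M, 1 / Real.sqrt (F s - F M) := by
    intro M hM
    obtain ⟨hFMε, hFM0, haM⟩ := hFM M hM
    have hM1 : M < 1 := hM.2
    have hM0 : 0 < M := lt_trans ha01 haM
    set f : ℝ → ℝ := fun s => 1 / Real.sqrt (F s - F M) with hfdef
    have hfnn : ∀ s, 0 ≤ f s := fun s => div_nonneg zero_le_one (Real.sqrt_nonneg _)
    have hfm : Measurable f := measurable_const.div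
      ((Real.continuous_sqrt.comp (hcF.sub continuous_const)).measurable)
    -- part (i): strict inequality
    have hstrict : ∀ s ∈ Ico (0:ℝ) M, F M < F s := by
      intro s hs
      rcases le_or_gt s a with h | h
      · have := hεmin s ⟨hs.1, h⟩; linarith
      · exact hanti ⟨le_of_lt h, le_of_lt (lt_trans hs.2 hM1)⟩
          ⟨le_of_lt haM, le_of_lt hM1⟩ hs.2
    -- integrability on (0, a]
    have hint1 : IntegrableOn f (Ioc 0 a) := by
      apply Measure.integrableOn_of_bounded (measure_Ioc_lt_top).ne
        hfm.aestronglyMeasurable (M := 1 / Real.sqrt (ε₀/2))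
      rw [ae_restrict_iff' measurableSet_Ioc]
      filter_upwards with x hx
      have hFx : ε₀ ≤ F x := hεmin x ⟨le_of_lt hx.1, hx.2⟩
      have hb1 : ε₀/2 ≤ F x - F M := by linarith
      have hb2 : Real.sqrt (ε₀/2) ≤ Real.sqrt (F x - F M) := Real.sqrt_le_sqrt hb1
      have hb3 : 0 < Real.sqrt (ε₀/2) := Real.sqrt_pos.mpr (by positivity)
      rw [Real.norm_eq_abs, abs_of_nonneg (hfnn x)]
      exact one_div_le_one_div_of_le hb3 hb2
    -- integrability on (a, M]
    have hint2 : IntegrableOn f (Ioc a M) := by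
      set C := (Real.sqrt (m * (1-M)))⁻¹ with hCdef
      have hg : IntegrableOn (fun x => C * (M - x) ^ (-(1/2):ℝ)) (Ioc a M) := by
        have hg1 : IntervalIntegrable (fun x : ℝ => x ^ (-(1/2):ℝ)) volume 0 (M - a) :=
          intervalIntegrable_rpow' (by norm_num)
        have hg2 := (hg1.comp_sub_left M).symm
        have hg3 : IntervalIntegrable (fun x : ℝ => (M - x) ^ (-(1/2):ℝ)) volume a M := by
          simpa using hg2
        exact ((intervalIntegrable_iff_integrableOn_Ioc_of_le (le_of_lt haM)).mp hg3).const_mul C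
      apply hg.mono' hfm.aestronglyMeasurable
      rw [ae_restrict_iff' measurableSet_Ioc]
      filter_upwards with x hx
      rw [Real.norm_eq_abs, abs_of_nonneg (hfnn x)]
      rcases eq_or_lt_of_le hx.2 with heq | hxM
      · have : f x = 0 := by
          rw [hfdef]; simp [heq, Real.sqrt_zero]
        rw [this, heq]
        simp [Real.zero_rpow (by norm_num : (-(1/2):ℝ) ≠ 0)]
      · have hd := hFdiff x M (le_of_lt hx.1) (le_of_lt hxM) (le_of_lt hM1)
        have hMx : 0 < M - x := by linarith
        have h1M' : 0 < 1 - M := by linarith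
        have key : m * (1-M) * (M-x) ≤ F x - F M := by
          nlinarith [mul_nonneg (mul_nonneg hm0.le hMx.le) hMx.le]
        have hkey0 : 0 < m * (1-M) * (M-x) := by positivity
        have hs1 : Real.sqrt (m * (1-M) * (M-x)) ≤ Real.sqrt (F x - F M) :=
          Real.sqrt_le_sqrt key
        have hs2 : Real.sqrt (m * (1-M) * (M-x))
            = Real.sqrt (m * (1-M)) * Real.sqrt (M-x) :=
          Real.sqrt_mul (by positivity) _
        have hs3 : 0 < Real.sqrt (m * (1-M) * (M-x)) := Real.sqrt_pos.mpr hkey0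
        have := one_div_le_one_div_of_le hs3 hs1
        rw [hfdef]
        calc 1 / Real.sqrt (F x - F M) ≤ 1 / Real.sqrt (m * (1-M) * (M-x)) := this
          _ = C * (M - x) ^ (-(1/2):ℝ) := by
              rw [hs2, Real.rpow_neg hMx.le, ← Real.sqrt_eq_rpow, hCdef]
              rw [one_div, mul_inv]
    have hintOn : IntegrableOn f (Ioo 0 M) := by
      apply (hint1.union hint2).mono_set
      intro x hx
      rcases le_or_gt x a with h | h
      · exact Or.inl ⟨hx.1, h⟩
      · exact Or.inr ⟨h, le_of_lt hx.2⟩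
    -- lower bound
    have hintOn' : IntegrableOn f (Ioo a M) :=
      hintOn.mono_set (Ioo_subset_Ioo ha01.le le_rfl)
    have hg2cont : ContinuousOn (fun s : ℝ => cK * (1-s)⁻¹) (Icc a M) := by
      apply continuousOn_const.mul
      apply ((continuous_const.sub continuous_id).continuousOn).inv₀
      intro x hx
      have : x ≤ M := hx.2
      exact ne_of_gt (by show (0:ℝ) < 1 - x; linarith)
    have hg2int : IntegrableOn (fun s : ℝ => cK * (1-s)⁻¹) (Ioo a M) :=
      (hg2cont.integrableOn_Icc).mono_set Ioo_subset_Icc_self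
    have step2 : ∫ s in Ioo a M, cK * (1-s)⁻¹ ≤ ∫ s in Ioo a M, f s := by
      apply setIntegral_mono_on hg2int hintOn' measurableSet_Ioo
      intro x hx
      have hx0 : 0 ≤ x := le_of_lt (lt_trans ha01 hx.1)
      have hFx : F x - F M ≤ K/2 * (1-x)^2 := by
        have := hFupper x ⟨le_of_lt hx.1, le_of_lt (lt_trans hx.2 hM1)⟩
        linarith
      have hpos : 0 < F x - F M := sub_pos.mpr (hstrict x ⟨hx0, hx.2⟩)
      have h1x : 0 < 1 - x := by linarith [hx.2]
      have hsq : Real.sqrt (K/2 * (1-x)^2) = Real.sqrt (K/2) * (1-x) := by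
        rw [Real.sqrt_mul (by positivity), Real.sqrt_sq h1x.le]
      have h5 : Real.sqrt (F x - F M) ≤ Real.sqrt (K/2) * (1-x) := by
        rw [← hsq]; exact Real.sqrt_le_sqrt hFx
      have h6 : 0 < Real.sqrt (F x - F M) := Real.sqrt_pos.mpr hpos
      have h7 := one_div_le_one_div_of_le h6 h5
      calc cK * (1-x)⁻¹ = 1 / (Real.sqrt (K/2) * (1-x)) := by
            rw [hcK, one_div, mul_inv]
        _ ≤ f x := h7
    have step3 : (∫ s in Ioo a M, cK * (1-s)⁻¹)
        = cK * (Real.log (1-a) - Real.log (1-M)) := by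
      rw [← integral_Ioc_eq_integral_Ioo, ← intervalIntegral.integral_of_le (le_of_lt haM),
        intervalIntegral.integral_const_mul]
      congr 1
      have hcomp : ∫ s in a..M, (1-s)⁻¹ = ∫ x in (1-M)..(1-a), x⁻¹ :=
        integral_comp_sub_left (fun x : ℝ => x⁻¹) 1
      rw [hcomp, integral_inv, Real.log_div (by linarith) (by linarith)]
      rw [Set.uIcc_of_le (by linarith : (1:ℝ)-M ≤ 1-a)]
      rintro ⟨hmem, -⟩
      linarith
    have step1 : ∫ s in Ioo a M, f s ≤ ∫ s in Ioo 0 M, f s :=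
      setIntegral_mono_set hintOn (ae_of_all _ hfnn)
        ((Ioo_subset_Ioo ha01.le le_rfl).eventuallyLE)
    exact ⟨hstrict, hintOn, by
      calc cK * (Real.log (1-a) - Real.log (1-M)) = ∫ s in Ioo a M, cK * (1-s)⁻¹ := step3.symm
        _ ≤ ∫ s in Ioo a M, f s := step2
        _ ≤ ∫ s in Ioo 0 M, f s := step1⟩
  refine ⟨δ, ⟨hδ0, hδ1⟩, fun M hM => ⟨(main M hM).1, (main M hM).2.1⟩, ?_⟩
  have hbase : Tendsto (fun M : ℝ => cK * (Real.log (1-a) - Real.log (1-M)))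
      (nhdsWithin 1 (Iio 1)) atTop := by
    apply Tendsto.const_mul_atTop hcK0
    have h1M : Tendsto (fun M : ℝ => 1 - M) (nhdsWithin 1 (Iio 1)) (nhdsWithin 0 (Ioi 0)) := by
      apply tendsto_nhdsWithin_of_tendsto_nhds_of_eventually_within
      · have hcont : Tendsto (fun M : ℝ => 1 - M) (nhds 1) (nhds 0) := by
          have hc2 : Continuous (fun M : ℝ => 1 - M) := continuous_const.sub continuous_id
          simpa using hc2.tendsto 1
        exact hcont.mono_left nhdsWithin_le_nhds
      · filter_upwards [self_mem_nhdsWithin] with x hx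
        exact sub_pos.mpr (mem_Iio.mp hx)
    have hlog : Tendsto (fun M : ℝ => Real.log (1-M)) (nhdsWithin 1 (Iio 1)) atBot :=
      Real.tendsto_log_nhdsGT_zero.comp h1M
    have hneg : Tendsto (fun M : ℝ => -Real.log (1-M)) (nhdsWithin 1 (Iio 1)) atTop :=
      tendsto_neg_atTop_iff.mpr hlog
    have := tendsto_atTop_add_const_left _ (Real.log (1-a)) hneg
    simpa [sub_eq_add_neg] using this
  apply tendsto_atTop_mono' _ _ hbase
  filter_upwards [Ioo_mem_nhdsLT_of_mem
    (show (1:ℝ) ∈ Ioc (1-δ) 1 from ⟨by linarith, le_rfl⟩)] with M hM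
  exact (main M hM).2.2
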